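/- Consider the MPC feasible input sets U_f,N(x) for the system x⁺ = Ax + Bu with constraints X, U and terminal set X_T positively invariant under auxiliary law u = Kx with KX_T ⊆ U and (A+BK)X_T ⊆ X_T ⊆ X. If x ∈ X_f (feasible set) with optimizer (u*_0,…,u*_{N−1}) and resulting next state x⁺ = Ax + Bu*_0, then the shifted sequence (u*_1,…,u*_{N−1}, K x*_N) is feasible for x⁺, i.e., x⁺ ∈ X_f (recursive feasibility). -/

import Mathlib

open Matrix BigOperators

/-- Predicted state after `k` steps from `x` under input sequence `u`. -/
def pred {n m : ℕ} (A : Matrix (Fin n) (Fin n) ℝ) (B : Matrix (Fin n) (Fin m) ℝ)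
    (x : Fin n → ℝ) (u : ℕ → (Fin m → ℝ)) : ℕ → (Fin n → ℝ)
  | 0 => x
  | k + 1 => A *ᵥ pred A B x u k + B *ᵥ u k

theorem stmt_17 {n m : ℕ} (A : Matrix (Fin n) (Fin n) ℝ) (B : Matrix (Fin n) (Fin m) ℝ)
    (K : Matrix (Fin m) (Fin n) ℝ)
    (X XT : Set (Fin n → ℝ)) (U : Set (Fin m → ℝ)) (N : ℕ) (hN : 1 ≤ N)
    (hXTX : XT ⊆ X)
    (hK : ∀ z ∈ XT, K *ᵥ z ∈ U)
    (hinv : ∀ z ∈ XT, (A + B * K) *ᵥ z ∈ XT)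
    (x : Fin n → ℝ) (u : ℕ → (Fin m → ℝ))
    (hu : ∀ i < N, u i ∈ U)
    (hx : ∀ i, 1 ≤ i → i < N → pred A B x u i ∈ X)
    (hT : pred A B x u N ∈ XT) :
    -- the shifted sequence, appended with the auxiliary law u = Kx applied to
    -- the optimal terminal state, is feasible for the successor state
    (∀ i < N,
        (fun j => if j = N - 1 then K *ᵥ pred A B x u N else u (j + 1)) i ∈ U) ∧
    (∀ i, 1 ≤ i → i < N →
        pred A B (A *ᵥ x + B *ᵥ u 0)
          (fun j => if j = N - 1 then K *ᵥ pred A B x u N else u (j + 1)) i ∈ X) ∧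
    pred A B (A *ᵥ x + B *ᵥ u 0)
        (fun j => if j = N - 1 then K *ᵥ pred A B x u N else u (j + 1)) N ∈ XT := by
  set u' : ℕ → (Fin m → ℝ) :=
    fun j => if j = N - 1 then K *ᵥ pred A B x u N else u (j + 1) with hu'
  have key : ∀ i, i ≤ N - 1 →
      pred A B (A *ᵥ x + B *ᵥ u 0) u' i = pred A B x u (i + 1) := by
    intro i hi
    induction i with
    | zero => simp [pred]
    | succ k ih =>
      have hk : k < N - 1 := hi
      have hk' : u' k = u (k + 1) := by simp [hu', Nat.ne_of_lt hk]
      simp [pred, ih (le_of_lt hk), hk']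
  refine ⟨?_, ?_, ?_⟩
  · intro i hi
    by_cases h : i = N - 1
    · simpa [hu', h] using hK _ hT
    · have : i + 1 < N := by omega
      simpa [hu', h] using hu (i + 1) this
  · intro i h1 h2
    have := key i (by omega)
    rw [this]
    rcases eq_or_lt_of_le (Nat.succ_le_of_lt h2) with h | h
    · rw [show i + 1 = N from h]; exact hXTX hT
    · exact hx (i + 1) (by omega) h
  · have hNe : N = (N - 1) + 1 := by omega
    rw [hNe]
    have := key (N - 1) le_rfl
    rw [show (N - 1) + 1 = N from hNe.symm] at this
    simp only [pred, this]
    simp only [hu', if_pos rfl, ↓reduceIte]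
    have := hinv _ hT
    rwa [Matrix.add_mulVec, ← Matrix.mulVec_mulVec] at this
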